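/- Let (u_n) be probabilities and (U_n) independent {0,1}-valued random variables with P(U_n = 1) = u_n; write S = ∑_{n<N} u_n. Let N, Q, q_1, q_2 be positive integers with q_1, q_2 coprime and q_1 q_2 = Q, and fix residues r_1 < q_1, r_2 < q_2. Let G_0 be the family of all functions g_0 : [0, Q) → {0,1}; for i = 1, 2 let G_i be the family of all functions g_i : [0, Q + iN) → {0,1} vanishing outside the residue class r_i (mod q_i). Then for every ε with 0 < ε < 1, P( sup over g_0 ∈ G_0, g_1 ∈ G_1, g_2 ∈ G_2 of | (1/S) ∑_{n<N} (U_n − u_n) · ∑_{a<Q} g_0(a) g_1(a+n) g_2(a+2n) | > ε ) ≤ 2^{Q + (Q+N)/q_1 + (Q+2N)/q_2 + 3} · exp( − ε² S / 4 ). -/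

import Mathlib

open MeasureTheory Filter Finset
open ProbabilityTheory

lemma exp_le_quad {x : ℝ} (hx : x ≤ 1) : Real.exp x ≤ 1 + x + x ^ 2 := by
  rcases le_or_gt (-1) x with h | h
  · have habs : |x| ≤ 1 := abs_le.2 ⟨h, hx⟩
    have hb := Real.exp_bound habs (n := 3) (by norm_num)
    have h1 : Real.exp x - (1 + x + x ^ 2 / 2) ≤ |x| ^ 3 * (4 / (6 * 3)) := by
      have := (abs_sub_le_iff.1 hb).1
      simpa [Finset.sum_range_succ, Nat.factorial] using this
    have h2 : |x| ^ 3 ≤ x ^ 2 := by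
      calc |x| ^ 3 = |x| ^ 2 * |x| := by ring
      _ ≤ |x| ^ 2 * 1 := by nlinarith [abs_nonneg x]
      _ = x ^ 2 := by rw [mul_one, sq_abs]
    nlinarith [sq_nonneg x]
  · have hlt : Real.exp x < Real.exp (-1) := Real.exp_lt_exp.2 h
    have he : Real.exp (-1) ≤ 3/4 := by
      rw [Real.exp_neg]
      rw [inv_le_comm₀ (Real.exp_pos 1) (by norm_num)]
      calc (3/4 : ℝ)⁻¹ = 4/3 := by norm_num
      _ ≤ 2 := by norm_num
      _ ≤ Real.exp 1 := by have := Real.add_one_le_exp 1; linarith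
    nlinarith [sq_nonneg (x + 1/2)]

lemma bernoulli_mgf_bound {u s : ℝ} (hu0 : 0 ≤ u) (hu1 : u ≤ 1) (hs : |s| ≤ 1) :
    u * Real.exp (s * (1 - u)) + (1 - u) * Real.exp (-(s * u)) ≤ Real.exp (u * s ^ 2) := by
  have key : u * Real.exp (s * (1 - u)) + (1 - u) * Real.exp (-(s * u))
      = Real.exp (-(s * u)) * (1 + u * (Real.exp s - 1)) := by
    rw [show s * (1 - u) = s + -(s*u) by ring, Real.exp_add]
    ring
  rw [key]
  have h1 : 1 + u * (Real.exp s - 1) ≤ Real.exp (u * (Real.exp s - 1)) :=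
    Real.add_one_le_exp _ |>.trans_eq' (by ring_nf)
  calc Real.exp (-(s * u)) * (1 + u * (Real.exp s - 1))
      ≤ Real.exp (-(s * u)) * Real.exp (u * (Real.exp s - 1)) := by
        exact mul_le_mul_of_nonneg_left h1 (Real.exp_pos _).le
    _ = Real.exp (u * (Real.exp s - 1 - s)) := by rw [← Real.exp_add]; ring_nf
    _ ≤ Real.exp (u * s ^ 2) := by
        apply Real.exp_le_exp.2
        have := exp_le_quad (abs_le.1 hs).2
        nlinarith

lemma integral_two_valued {Ω : Type*} [MeasurableSpace Ω] (P : Measure Ω) [IsProbabilityMeasure P]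
    {V : Ω → ℕ} (hV : Measurable V) (h01 : ∀ ω, V ω = 0 ∨ V ω = 1)
    {u : ℝ} (hu0 : 0 ≤ u) (hlaw : P {ω | V ω = 1} = ENNReal.ofReal u)
    (f : ℕ → ℝ) : ∫ ω, f (V ω) ∂P = u * f 1 + (1 - u) * f 0 := by
  set A : Set Ω := {ω | V ω = 1} with hA
  have hAm : MeasurableSet A := hV (measurableSet_singleton 1)
  have hdecomp : ∀ ω, f (V ω) = f 0 + A.indicator (fun _ => f 1 - f 0) ω := by
    intro ω
    rcases h01 ω with h | h <;> simp [Set.indicator, hA, h]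
  have hint : Integrable (A.indicator (fun _ => f 1 - f 0)) P :=
    (integrable_const _).indicator hAm
  calc ∫ ω, f (V ω) ∂P = ∫ ω, (f 0 + A.indicator (fun _ => f 1 - f 0) ω) ∂P := by
        simp_rw [hdecomp]
    _ = f 0 + ∫ ω, A.indicator (fun _ => f 1 - f 0) ω ∂P := by
        rw [integral_add (integrable_const _) hint, integral_const]; simp
    _ = f 0 + (f 1 - f 0) * (P A).toReal := by
        rw [integral_indicator_const _ hAm]; simp [smul_eq_mul]; simp only [Measure.real]; ring
    _ = u * f 1 + (1 - u) * f 0 := by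
        rw [hlaw, ENNReal.toReal_ofReal hu0]; ring

lemma integrable_two_valued {Ω : Type*} [MeasurableSpace Ω] (P : Measure Ω) [IsProbabilityMeasure P]
    {V : Ω → ℕ} (hV : Measurable V) (h01 : ∀ ω, V ω = 0 ∨ V ω = 1)
    (f : ℕ → ℝ) : Integrable (fun ω => f (V ω)) P := by
  set A : Set Ω := {ω | V ω = 1} with hA
  have hAm : MeasurableSet A := hV (measurableSet_singleton 1)
  have hdecomp : ∀ ω, f (V ω) = f 0 + A.indicator (fun _ => f 1 - f 0) ω := by
    intro ω; rcases h01 ω with h | h <;> simp [Set.indicator, hA, h]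
  simp_rw [hdecomp]
  exact (integrable_const _).add ((integrable_const _).indicator hAm)

lemma count_residue_le {M q r : ℕ} :
    ((range M).filter (· % q = r)).card ≤ M / q + 1 := by
  have : ((range M).filter (· % q = r)).card ≤ (range (M / q + 1)).card := by
    apply Finset.card_le_card_of_injOn (fun x => x / q)
    · intro x hx
      simp only [Finset.mem_coe, mem_filter, mem_range] at hx ⊢
      have : x / q ≤ M / q := Nat.div_le_div_right hx.1.le
      omega
    · intro x hx y hy hxy
      simp only [Set.mem_setOf_eq, coe_filter, mem_range] at hx hy
      have h := hx.2.trans hy.2.symm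
      have hxy2 : x / q = y / q := by simpa using hxy
      have hx' := Nat.div_add_mod x q
      have hy' := Nat.div_add_mod y q
      rw [← hxy2] at hy'
      omega
  simpa using this

lemma crt_unique {q₁ q₂ Q a a' : ℕ} (hcop : Nat.Coprime q₁ q₂) (hQ : q₁ * q₂ = Q)
    (ha : a < Q) (ha' : a' < Q) (h1 : a % q₁ = a' % q₁) (h2 : a % q₂ = a' % q₂) : a = a' := by
  have hm : a ≡ a' [MOD q₁ * q₂] :=
    (Nat.modEq_and_modEq_iff_modEq_mul hcop).1 ⟨h1, h2⟩
  rw [hQ] at hm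
  unfold Nat.ModEq at hm
  rwa [Nat.mod_eq_of_lt ha, Nat.mod_eq_of_lt ha'] at hm

lemma weight_bound {q₁ q₂ Q : ℕ} (hcop : Nat.Coprime q₁ q₂) (hQ : q₁ * q₂ = Q)
    {r₁ r₂ : ℕ} (g₀ g₁ g₂ : ℕ → ℝ)
    (h₀ : ∀ a, g₀ a = 0 ∨ g₀ a = 1)
    (h₁ : ∀ x, g₁ x = 0 ∨ g₁ x = 1) (h₁s : ∀ x, g₁ x ≠ 0 → x % q₁ = r₁)
    (h₂ : ∀ x, g₂ x = 0 ∨ g₂ x = 1) (h₂s : ∀ x, g₂ x ≠ 0 → x % q₂ = r₂)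
    (n : ℕ) : |∑ a ∈ range Q, g₀ a * g₁ (a + n) * g₂ (a + 2 * n)| ≤ 1 := by
  set f : ℕ → ℝ := fun a => g₀ a * g₁ (a + n) * g₂ (a + 2 * n) with hf
  have hf01 : ∀ a, f a = 0 ∨ f a = 1 := by
    intro a
    rcases h₀ a with h | h <;> rcases h₁ (a + n) with h' | h' <;>
      rcases h₂ (a + 2 * n) with h'' | h'' <;> simp [hf, h, h', h'']
  have hnn : ∀ a, 0 ≤ f a := fun a => by rcases hf01 a with h | h <;> simp [h]
  have huniq : ∀ a ∈ range Q, ∀ a' ∈ range Q, f a ≠ 0 → f a' ≠ 0 → a = a' := by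
    intro a ha a' ha' hfa hfa'
    rw [mem_range] at ha ha'
    have hga : g₁ (a + n) ≠ 0 ∧ g₂ (a + 2 * n) ≠ 0 := by
      constructor <;> intro h <;> apply hfa <;> simp [hf, h]
    have hga' : g₁ (a' + n) ≠ 0 ∧ g₂ (a' + 2 * n) ≠ 0 := by
      constructor <;> intro h <;> apply hfa' <;> simp [hf, h]
    have e1 : (a + n) % q₁ = (a' + n) % q₁ := (h₁s _ hga.1).trans (h₁s _ hga'.1).symm
    have e2 : (a + 2 * n) % q₂ = (a' + 2 * n) % q₂ := (h₂s _ hga.2).trans (h₂s _ hga'.2).symm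
    have m1 : a % q₁ = a' % q₁ := Nat.ModEq.add_right_cancel' n e1
    have m2 : a % q₂ = a' % q₂ := Nat.ModEq.add_right_cancel' (2 * n) e2
    exact crt_unique hcop hQ ha ha' m1 m2
  rw [abs_of_nonneg (Finset.sum_nonneg fun a _ => hnn a)]
  have hsplit : ∑ a ∈ range Q, f a = ∑ a ∈ (range Q).filter (fun a => f a ≠ 0), f a :=
    (Finset.sum_filter_ne_zero _).symm
  rw [hsplit]
  have hcard : ((range Q).filter (fun a => f a ≠ 0)).card ≤ 1 := by
    rw [Finset.card_le_one]
    intro a ha b hb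
    rw [mem_filter] at ha hb
    exact huniq a (ha.1) b (hb.1) ha.2 hb.2
  calc ∑ a ∈ (range Q).filter (fun a => f a ≠ 0), f a
      ≤ ∑ _a ∈ (range Q).filter (fun a => f a ≠ 0), (1:ℝ) := by
        apply Finset.sum_le_sum
        intro a _
        rcases hf01 a with h | h <;> simp [h]
    _ = ((range Q).filter (fun a => f a ≠ 0)).card := by simp
    _ ≤ 1 := by exact_mod_cast hcard

section chernoff

variable {Ω : Type*} [MeasurableSpace Ω] (P : Measure Ω) [IsProbabilityMeasure P]
    (u : ℕ → ℝ) (hu_pos : ∀ n, 0 < u n) (hu_le : ∀ n, u n ≤ 1)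
    (U : ℕ → Ω → ℕ) (hU_meas : ∀ n, Measurable (U n))
    (hU01 : ∀ n ω, U n ω = 0 ∨ U n ω = 1)
    (hU_indep : ProbabilityTheory.iIndepFun U P)
    (hU_law : ∀ n, P {ω | U n ω = 1} = ENNReal.ofReal (u n))

include hu_pos hu_le hU_meas hU01 hU_indep hU_law in
lemma chernoff_one_sided (c : ℕ → ℝ) (hc : ∀ n, |c n| ≤ 1) (N : ℕ)
    (ε : ℝ) (hε0 : 0 < ε) (hε1 : ε < 1) :
    P {ω | ε * (∑ n ∈ range N, u n) ≤ ∑ n ∈ range N, c n * ((U n ω : ℝ) - u n)}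
      ≤ ENNReal.ofReal (Real.exp (-(ε^2) * (∑ n ∈ range N, u n) / 4)) := by
  set t : ℝ := ε / 2 with ht_def
  have ht0 : 0 ≤ t := by positivity
  have ht1 : t ≤ 1 := by rw [ht_def]; linarith
  set Y : ℕ → Ω → ℝ := fun n ω => c n * ((U n ω : ℝ) - u n) with hY
  have hYmeas : ∀ n, Measurable (Y n) := by
    intro n
    have h1 : Measurable fun ω => ((U n ω : ℕ) : ℝ) := measurable_from_top.comp (hU_meas n)
    exact (h1.sub_const (u n)).const_mul _
  have hYindep : iIndepFun Y P := by
    exact hU_indep.comp (fun n (k : ℕ) => c n * ((k : ℝ) - u n)) (fun n => measurable_from_top)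
  have hYint : ∀ n, Integrable (fun ω => Real.exp (t * Y n ω)) P := fun n =>
    integrable_two_valued P (hU_meas n) (hU01 n) (fun k => Real.exp (t * (c n * ((k:ℝ) - u n))))
  have hmgf : ∀ n, mgf (Y n) P t ≤ Real.exp (t ^ 2 * u n) := by
    intro n
    have hexp : mgf (Y n) P t
        = u n * Real.exp ((t * c n) * (1 - u n)) + (1 - u n) * Real.exp (-((t * c n) * u n)) := by
      rw [mgf]
      rw [integral_two_valued P (hU_meas n) (hU01 n) (hu_pos n).le (hU_law n)
        (fun k => Real.exp (t * (c n * ((k:ℝ) - u n))))]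
      have e1 : t * (c n * (((1:ℕ):ℝ) - u n)) = (t * c n) * (1 - u n) := by push_cast; ring
      have e2 : t * (c n * (((0:ℕ):ℝ) - u n)) = -((t * c n) * u n) := by push_cast; ring
      rw [e1, e2]
    rw [hexp]
    have hs : |t * c n| ≤ 1 := by
      rw [abs_mul, abs_of_nonneg ht0]
      calc t * |c n| ≤ 1 * 1 := by
            apply mul_le_mul ht1 (hc n) (abs_nonneg _) zero_le_one
        _ = 1 := one_mul 1
    calc u n * Real.exp ((t * c n) * (1 - u n)) + (1 - u n) * Real.exp (-((t * c n) * u n))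
        ≤ Real.exp (u n * (t * c n) ^ 2) := bernoulli_mgf_bound (hu_pos n).le (hu_le n) hs
      _ ≤ Real.exp (t ^ 2 * u n) := by
          apply Real.exp_le_exp.2
          have h2 : (c n) ^ 2 ≤ 1 := by
            have := hc n; nlinarith [abs_nonneg (c n), sq_abs (c n)]
          have h3 : 0 ≤ u n * t^2 * (1 - c n ^ 2) :=
            mul_nonneg (mul_nonneg (hu_pos n).le (sq_nonneg t)) (by linarith)
          nlinarith [h3]
  set X : Ω → ℝ := ∑ n ∈ range N, Y n with hX
  have hXsum : ∀ ω, X ω = ∑ n ∈ range N, c n * ((U n ω : ℝ) - u n) := by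
    intro ω; rw [hX, Finset.sum_apply]
  have hXint : Integrable (fun ω => Real.exp (t * X ω)) P :=
    hYindep.integrable_exp_mul_sum hYmeas (fun n _ => hYint n)
  set S : ℝ := ∑ n ∈ range N, u n with hS
  have hSnn : 0 ≤ S := Finset.sum_nonneg fun n _ => (hu_pos n).le
  have hcher := measure_ge_le_exp_mul_mgf (X := X) (μ := P) (ε * S) ht0 hXint
  have hmgfX : mgf X P t ≤ Real.exp (t ^ 2 * S) := by
    rw [hX, hYindep.mgf_sum hYmeas]
    calc ∏ n ∈ range N, mgf (Y n) P t ≤ ∏ n ∈ range N, Real.exp (t ^ 2 * u n) :=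
          Finset.prod_le_prod (fun n _ => mgf_nonneg) (fun n _ => hmgf n)
      _ = Real.exp (t ^ 2 * S) := by
          rw [← Real.exp_sum, hS, Finset.mul_sum]
  have hfinal : (P {ω | ε * S ≤ X ω}).toReal ≤ Real.exp (-(ε^2) * S / 4) := by
    calc (P {ω | ε * S ≤ X ω}).toReal ≤ Real.exp (-t * (ε * S)) * mgf X P t := hcher
      _ ≤ Real.exp (-t * (ε * S)) * Real.exp (t ^ 2 * S) := by
          exact mul_le_mul_of_nonneg_left hmgfX (Real.exp_pos _).le
      _ = Real.exp (-(ε^2) * S / 4) := by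
          rw [← Real.exp_add]; congr 1; rw [ht_def]; ring
  have hset : {ω | ε * S ≤ ∑ n ∈ range N, c n * ((U n ω : ℝ) - u n)} = {ω | ε * S ≤ X ω} := by
    ext ω; simp [hXsum ω]
  rw [hset]
  have := ENNReal.ofReal_le_ofReal hfinal
  rwa [ENNReal.ofReal_toReal (measure_ne_top P _)] at this

include hu_pos hu_le hU_meas hU01 hU_indep hU_law in
lemma chernoff_two_sided (c : ℕ → ℝ) (hc : ∀ n, |c n| ≤ 1) (N : ℕ)
    (ε : ℝ) (hε0 : 0 < ε) (hε1 : ε < 1) :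
    P {ω | ε * (∑ n ∈ range N, u n) < |∑ n ∈ range N, ((U n ω : ℝ) - u n) * c n|}
      ≤ ENNReal.ofReal (2 * Real.exp (-(ε^2) * (∑ n ∈ range N, u n) / 4)) := by
  set S : ℝ := ∑ n ∈ range N, u n with hS
  have hsub : {ω | ε * S < |∑ n ∈ range N, ((U n ω : ℝ) - u n) * c n|}
      ⊆ {ω | ε * S ≤ ∑ n ∈ range N, c n * ((U n ω : ℝ) - u n)}
        ∪ {ω | ε * S ≤ ∑ n ∈ range N, (-c n) * ((U n ω : ℝ) - u n)} := by
    intro ω hω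
    simp only [Set.mem_setOf_eq] at hω
    set T := ∑ n ∈ range N, ((U n ω : ℝ) - u n) * c n with hT
    have e1 : ∑ n ∈ range N, c n * ((U n ω : ℝ) - u n) = T := by
      rw [hT]; exact Finset.sum_congr rfl fun n _ => mul_comm _ _
    have e2 : ∑ n ∈ range N, (-c n) * ((U n ω : ℝ) - u n) = -T := by
      rw [hT, ← Finset.sum_neg_distrib]
      exact Finset.sum_congr rfl fun n _ => by ring
    rcases le_or_gt 0 T with h | h
    · left
      simp only [Set.mem_setOf_eq, e1]
      rw [abs_of_nonneg h] at hω
      linarith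
    · right
      simp only [Set.mem_setOf_eq, e2]
      rw [abs_of_neg h] at hω
      linarith
  refine (measure_mono hsub).trans ((measure_union_le _ _).trans ?_)
  have b1 := chernoff_one_sided P u hu_pos hu_le U hU_meas hU01 hU_indep hU_law c hc N ε hε0 hε1
  have b2 := chernoff_one_sided P u hu_pos hu_le U hU_meas hU01 hU_indep hU_law
    (fun n => -c n) (fun n => by simpa using hc n) N ε hε0 hε1
  calc P {ω | ε * S ≤ ∑ n ∈ range N, c n * ((U n ω : ℝ) - u n)}
        + P {ω | ε * S ≤ ∑ n ∈ range N, (-c n) * ((U n ω : ℝ) - u n)}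
      ≤ ENNReal.ofReal (Real.exp (-(ε^2) * S / 4)) + ENNReal.ofReal (Real.exp (-(ε^2) * S / 4)) :=
        add_le_add b1 b2
    _ = ENNReal.ofReal (2 * Real.exp (-(ε^2) * S / 4)) := by
        rw [← ENNReal.ofReal_add (Real.exp_pos _).le (Real.exp_pos _).le, two_mul]

end chernoff

/-- With `q₁, q₂` coprime, `q₁ q₂ = Q`, and residues `r₁ < q₁`, `r₂ < q₂`, the
probability that, for **some** choice of a `{0,1}`-valued `g₀` supported on `[0,Q)` and
`{0,1}`-valued `g₁, g₂` supported on `[0, Q+N)`, `[0, Q+2N)` and on the residue classes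
`r₁ (mod q₁)`, `r₂ (mod q₂)` respectively, the average
`(1/S) ∑_{n<N} (U n - u n) ∑_{a<Q} g₀(a) g₁(a+n) g₂(a+2n)` exceeds `ε` in absolute
value, is at most `2^{Q + (Q+N)/q₁ + (Q+2N)/q₂ + 3} · exp(-ε² S / 4)`. -/
theorem stmt15
    {Ω : Type*} [MeasurableSpace Ω] (P : Measure Ω) [IsProbabilityMeasure P]
    (u : ℕ → ℝ) (hu_pos : ∀ n, 0 < u n) (hu_le : ∀ n, u n ≤ 1)
    (U : ℕ → Ω → ℕ) (hU_meas : ∀ n, Measurable (U n))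
    (hU01 : ∀ n ω, U n ω = 0 ∨ U n ω = 1)
    (hU_indep : ProbabilityTheory.iIndepFun U P)
    (hU_law : ∀ n, P {ω | U n ω = 1} = ENNReal.ofReal (u n))
    (N Q q₁ q₂ : ℕ) (hN : 1 ≤ N) (hq₁ : 1 ≤ q₁) (hq₂ : 1 ≤ q₂)
    (hcop : Nat.Coprime q₁ q₂) (hQ : q₁ * q₂ = Q)
    (r₁ r₂ : ℕ) (hr₁ : r₁ < q₁) (hr₂ : r₂ < q₂)
    (ε : ℝ) (hε0 : 0 < ε) (hε1 : ε < 1) :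
    P {ω | ∃ g₀ g₁ g₂ : ℕ → ℝ,
        (∀ a, g₀ a = 0 ∨ g₀ a = 1) ∧ (∀ a, Q ≤ a → g₀ a = 0) ∧
        (∀ x, g₁ x = 0 ∨ g₁ x = 1) ∧ (∀ x, g₁ x ≠ 0 → x < Q + N ∧ x % q₁ = r₁) ∧
        (∀ x, g₂ x = 0 ∨ g₂ x = 1) ∧ (∀ x, g₂ x ≠ 0 → x < Q + 2 * N ∧ x % q₂ = r₂) ∧
        ε < |(1 / (∑ n ∈ Finset.range N, u n : ℝ)) *
          ∑ n ∈ Finset.range N, ((U n ω : ℝ) - u n) *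
            ∑ a ∈ Finset.range Q, g₀ a * g₁ (a + n) * g₂ (a + 2 * n)|} ≤
      ENNReal.ofReal
        ((2 : ℝ) ^ ((Q : ℝ) + ((Q : ℝ) + N) / q₁ + ((Q : ℝ) + 2 * N) / q₂ + 3) *
          Real.exp (-(ε ^ 2) * (∑ n ∈ Finset.range N, u n) / 4)) := by
  classical
  set S : ℝ := ∑ n ∈ Finset.range N, u n with hS_def
  have hS_pos : 0 < S :=
    Finset.sum_pos (fun n _ => hu_pos n) (Finset.nonempty_range_iff.2 (by omega))
  set I₁ : Finset ℕ := (range (Q + N)).filter (· % q₁ = r₁) with hI₁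
  set I₂ : Finset ℕ := (range (Q + 2 * N)).filter (· % q₂ = r₂) with hI₂
  set ι : Finset (Finset ℕ × Finset ℕ × Finset ℕ) :=
    (range Q).powerset ×ˢ (I₁.powerset ×ˢ I₂.powerset) with hι
  set ind : Finset ℕ → ℕ → ℝ := fun s x => if x ∈ s then 1 else 0 with hind
  set cf : Finset ℕ × Finset ℕ × Finset ℕ → ℕ → ℝ :=
    fun p n => ∑ a ∈ range Q, ind p.1 a * ind p.2.1 (a + n) * ind p.2.2 (a + 2 * n) with hcf
  set E : Finset ℕ × Finset ℕ × Finset ℕ → Set Ω :=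
    fun p => {ω | ε * S < |∑ n ∈ range N, ((U n ω : ℝ) - u n) * cf p n|} with hE
  -- the main event is contained in a finite union
  have hsub : {ω | ∃ g₀ g₁ g₂ : ℕ → ℝ,
        (∀ a, g₀ a = 0 ∨ g₀ a = 1) ∧ (∀ a, Q ≤ a → g₀ a = 0) ∧
        (∀ x, g₁ x = 0 ∨ g₁ x = 1) ∧ (∀ x, g₁ x ≠ 0 → x < Q + N ∧ x % q₁ = r₁) ∧
        (∀ x, g₂ x = 0 ∨ g₂ x = 1) ∧ (∀ x, g₂ x ≠ 0 → x < Q + 2 * N ∧ x % q₂ = r₂) ∧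
        ε < |(1 / S) *
          ∑ n ∈ Finset.range N, ((U n ω : ℝ) - u n) *
            ∑ a ∈ Finset.range Q, g₀ a * g₁ (a + n) * g₂ (a + 2 * n)|}
      ⊆ ⋃ p ∈ ι, E p := by
    rintro ω ⟨g₀, g₁, g₂, hg₀v, hg₀s, hg₁v, hg₁s, hg₂v, hg₂s, hval⟩
    set s₀ : Finset ℕ := (range Q).filter (fun a => g₀ a ≠ 0) with hs₀
    set s₁ : Finset ℕ := I₁.filter (fun x => g₁ x ≠ 0) with hs₁
    set s₂ : Finset ℕ := I₂.filter (fun x => g₂ x ≠ 0) with hs₂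
    have hp : (s₀, s₁, s₂) ∈ ι := by
      simp only [hι, Finset.mem_product, Finset.mem_powerset]
      exact ⟨Finset.filter_subset _ _, Finset.filter_subset _ _, Finset.filter_subset _ _⟩
    have hind₀ : ∀ a, ind s₀ a = g₀ a := by
      intro a
      by_cases h : g₀ a = 0
      · simp [hind, hs₀, h]
      · have h1 : g₀ a = 1 := (hg₀v a).resolve_left h
        have haQ : a < Q := by by_contra hc; exact h (hg₀s a (le_of_not_gt hc))
        simp [hind, hs₀, mem_filter, mem_range, haQ, h, h1]
    have hind₁ : ∀ x, ind s₁ x = g₁ x := by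
      intro x
      by_cases h : g₁ x = 0
      · simp [hind, hs₁, h]
      · have h1 : g₁ x = 1 := (hg₁v x).resolve_left h
        obtain ⟨hx1, hx2⟩ := hg₁s x h
        simp [hind, hs₁, hI₁, mem_filter, mem_range, hx1, hx2, h, h1]
    have hind₂ : ∀ x, ind s₂ x = g₂ x := by
      intro x
      by_cases h : g₂ x = 0
      · simp [hind, hs₂, h]
      · have h1 : g₂ x = 1 := (hg₂v x).resolve_left h
        obtain ⟨hx1, hx2⟩ := hg₂s x h
        simp [hind, hs₂, hI₂, mem_filter, mem_range, hx1, hx2, h, h1]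
    have hceq : ∀ n, cf (s₀, s₁, s₂) n
        = ∑ a ∈ range Q, g₀ a * g₁ (a + n) * g₂ (a + 2 * n) := by
      intro n
      exact Finset.sum_congr rfl fun a _ => by rw [hind₀, hind₁, hind₂]
    refine Set.mem_biUnion hp ?_
    simp only [hE, Set.mem_setOf_eq]
    have hT : ∑ n ∈ range N, ((U n ω : ℝ) - u n) * cf (s₀, s₁, s₂) n
        = ∑ n ∈ Finset.range N, ((U n ω : ℝ) - u n) *
            ∑ a ∈ Finset.range Q, g₀ a * g₁ (a + n) * g₂ (a + 2 * n) :=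
      Finset.sum_congr rfl fun n _ => by rw [hceq n]
    rw [hT]
    set T : ℝ := ∑ n ∈ Finset.range N, ((U n ω : ℝ) - u n) *
            ∑ a ∈ Finset.range Q, g₀ a * g₁ (a + n) * g₂ (a + 2 * n) with hTdef
    have habs : |(1 / S) * T| = |T| / S := by
      rw [abs_mul, abs_of_pos (by positivity : (0:ℝ) < 1 / S)]
      ring
    rw [habs] at hval
    exact (lt_div_iff₀ hS_pos).1 hval
  -- per-index bound
  have hbound : ∀ p ∈ ι, P (E p) ≤ ENNReal.ofReal (2 * Real.exp (-(ε^2) * S / 4)) := by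
    intro p hp
    simp only [hι, Finset.mem_product, Finset.mem_powerset] at hp
    obtain ⟨hp0, hp1, hp2⟩ := hp
    have hc : ∀ n, |cf p n| ≤ 1 := by
      intro n
      apply weight_bound hcop hQ (ind p.1) (ind p.2.1) (ind p.2.2)
      · intro a; by_cases h : a ∈ p.1 <;> simp [hind, h]
      · intro x; by_cases h : x ∈ p.2.1 <;> simp [hind, h]
      · intro x hx
        have hmem : x ∈ p.2.1 := by
          by_contra h; exact hx (by simp [hind, h])
        have := hp1 hmem
        rw [hI₁, mem_filter] at this
        exact this.2
      · intro x; by_cases h : x ∈ p.2.2 <;> simp [hind, h]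
      · intro x hx
        have hmem : x ∈ p.2.2 := by
          by_contra h; exact hx (by simp [hind, h])
        have := hp2 hmem
        rw [hI₂, mem_filter] at this
        exact this.2
    exact chernoff_two_sided P u hu_pos hu_le U hU_meas hU01 hU_indep hU_law
      (cf p) hc N ε hε0 hε1
  -- cardinality facts
  have hcard₁ : (I₁.card : ℝ) ≤ ((Q:ℝ) + N) / q₁ + 1 := by
    have h1 : I₁.card ≤ (Q + N) / q₁ + 1 := count_residue_le
    have h2 : (((Q + N) / q₁ : ℕ) : ℝ) ≤ ((Q:ℝ) + N) / q₁ := by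
      have := Nat.cast_div_le (m := Q + N) (n := q₁) (α := ℝ)
      push_cast at this ⊢
      exact this
    calc (I₁.card : ℝ) ≤ (((Q + N) / q₁ + 1 : ℕ) : ℝ) := by exact_mod_cast h1
      _ ≤ ((Q:ℝ) + N) / q₁ + 1 := by push_cast; linarith
  have hcard₂ : (I₂.card : ℝ) ≤ ((Q:ℝ) + 2 * N) / q₂ + 1 := by
    have h1 : I₂.card ≤ (Q + 2 * N) / q₂ + 1 := count_residue_le
    have h2 : (((Q + 2 * N) / q₂ : ℕ) : ℝ) ≤ ((Q:ℝ) + 2 * N) / q₂ := by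
      have := Nat.cast_div_le (m := Q + 2 * N) (n := q₂) (α := ℝ)
      push_cast at this ⊢
      exact this
    calc (I₂.card : ℝ) ≤ (((Q + 2 * N) / q₂ + 1 : ℕ) : ℝ) := by exact_mod_cast h1
      _ ≤ ((Q:ℝ) + 2 * N) / q₂ + 1 := by push_cast; linarith
  have hcard : ι.card = 2 ^ Q * (2 ^ I₁.card * 2 ^ I₂.card) := by
    rw [hι, Finset.card_product, Finset.card_product,
      Finset.card_powerset, Finset.card_powerset, Finset.card_powerset, Finset.card_range]
  -- final computation
  calc P _ ≤ P (⋃ p ∈ ι, E p) := measure_mono hsub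
    _ ≤ ∑ p ∈ ι, P (E p) := measure_biUnion_finset_le _ _
    _ ≤ ∑ _p ∈ ι, ENNReal.ofReal (2 * Real.exp (-(ε^2) * S / 4)) :=
        Finset.sum_le_sum hbound
    _ = (ι.card : ENNReal) * ENNReal.ofReal (2 * Real.exp (-(ε^2) * S / 4)) := by
        rw [Finset.sum_const, nsmul_eq_mul]
    _ = ENNReal.ofReal ((ι.card : ℝ) * (2 * Real.exp (-(ε^2) * S / 4))) := by
        rw [← ENNReal.ofReal_natCast ι.card, ← ENNReal.ofReal_mul (Nat.cast_nonneg _)]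
    _ ≤ ENNReal.ofReal
        ((2 : ℝ) ^ ((Q : ℝ) + ((Q : ℝ) + N) / q₁ + ((Q : ℝ) + 2 * N) / q₂ + 3) *
          Real.exp (-(ε ^ 2) * S / 4)) := by
        apply ENNReal.ofReal_le_ofReal
        rw [show (ι.card : ℝ) * (2 * Real.exp (-(ε^2) * S / 4))
            = ((ι.card : ℝ) * 2) * Real.exp (-(ε^2) * S / 4) by ring]
        apply mul_le_mul_of_nonneg_right _ (Real.exp_pos _).le
        have hcardR : (ι.card : ℝ) * 2 = (2:ℝ) ^ (Q + I₁.card + I₂.card + 1 : ℕ) := by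
          rw [hcard]; push_cast; ring
        rw [hcardR]
        have hexp_le : ((Q + I₁.card + I₂.card + 1 : ℕ) : ℝ)
            ≤ (Q : ℝ) + ((Q : ℝ) + N) / q₁ + ((Q : ℝ) + 2 * N) / q₂ + 3 := by
          push_cast
          linarith [hcard₁, hcard₂]
        calc (2:ℝ) ^ (Q + I₁.card + I₂.card + 1 : ℕ)
            = (2:ℝ) ^ (((Q + I₁.card + I₂.card + 1 : ℕ) : ℝ)) := by
              rw [Real.rpow_natCast]
          _ ≤ (2 : ℝ) ^ ((Q : ℝ) + ((Q : ℝ) + N) / q₁ + ((Q : ℝ) + 2 * N) / q₂ + 3) :=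
              Real.rpow_le_rpow_of_exponent_le (by norm_num) hexp_le
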